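/- Let λ₁, λ₂ ∈ ℂ with λᵢ ≠ 0, 1, −1. Let A,B,C₁,C₂ ∈ SL(2,ℂ) with [A,B]·C₁·C₂ = Id, where C₁ is conjugate in SL(2,ℂ) to ξ_{λ₁} and C₂ is conjugate to ξ_{λ₂}. Suppose P ∈ SL(2,ℂ), P ≠ Id and P ≠ −Id, commutes with each of A, B, C₁, C₂. Then [A,B] = Id, C₂ = C₁⁻¹, and λ₂ = λ₁ or λ₂ = λ₁⁻¹. -/

import Mathlib

open Matrix
open scoped commutatorElement

abbrev SL2C := Matrix.SpecialLinearGroup (Fin 2) ℂ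

/-- `ξ_λ = diag(λ, λ⁻¹)` as an element of SL(2,ℂ), for `λ ≠ 0`. -/
noncomputable def xi (l : ℂ) (hl : l ≠ 0) : SL2C :=
  ⟨!![l, 0; 0, l⁻¹], by simp [Matrix.det_fin_two_of, mul_inv_cancel₀ hl]⟩

section aux

lemma entry_eqs' (P X : Matrix (Fin 2) (Fin 2) ℂ) (hX : X * P = P * X) :
    (X 0 0 * P 0 0 + X 0 1 * P 1 0 = P 0 0 * X 0 0 + P 0 1 * X 1 0) ∧
    (X 0 0 * P 0 1 + X 0 1 * P 1 1 = P 0 0 * X 0 1 + P 0 1 * X 1 1) ∧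
    (X 1 0 * P 0 0 + X 1 1 * P 1 0 = P 1 0 * X 0 0 + P 1 1 * X 1 0) := by
  refine ⟨?_, ?_, ?_⟩
  · have := congrFun (congrFun hX 0) 0
    simpa [Matrix.mul_apply, Fin.sum_univ_two] using this
  · have := congrFun (congrFun hX 0) 1
    simpa [Matrix.mul_apply, Fin.sum_univ_two] using this
  · have := congrFun (congrFun hX 1) 0
    simpa [Matrix.mul_apply, Fin.sum_univ_two] using this

lemma span_of_commute' (P X : Matrix (Fin 2) (Fin 2) ℂ)
    (hns : P 0 1 ≠ 0 ∨ P 1 0 ≠ 0 ∨ P 0 0 ≠ P 1 1)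
    (hX : X * P = P * X) : ∃ α β : ℂ, X = α • 1 + β • P := by
  obtain ⟨e1, e2, e3⟩ := entry_eqs' P X hX
  rcases hns with hb | hc | hd
  · refine ⟨X 0 0 - X 0 1 / P 0 1 * P 0 0, X 0 1 / P 0 1, ?_⟩
    ext i j
    fin_cases i <;> fin_cases j <;>
      simp [Fin.zero_eta, Fin.mk_one, Matrix.add_apply, Matrix.smul_apply, Matrix.one_apply]
    all_goals try field_simp
    all_goals first
      | ring1
      | linear_combination e1
      | linear_combination -e1
      | linear_combination e2
      | linear_combination -e2
      | linear_combination e3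
      | linear_combination -e3
  · refine ⟨X 0 0 - X 1 0 / P 1 0 * P 0 0, X 1 0 / P 1 0, ?_⟩
    ext i j
    fin_cases i <;> fin_cases j <;>
      simp [Fin.zero_eta, Fin.mk_one, Matrix.add_apply, Matrix.smul_apply, Matrix.one_apply]
    all_goals try field_simp
    all_goals first
      | ring1
      | linear_combination e1
      | linear_combination -e1
      | linear_combination e2
      | linear_combination -e2
      | linear_combination e3
      | linear_combination -e3
  · refine ⟨X 0 0 - (X 0 0 - X 1 1) / (P 0 0 - P 1 1) * P 0 0,
      (X 0 0 - X 1 1) / (P 0 0 - P 1 1), ?_⟩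
    have hd' : P 0 0 - P 1 1 ≠ 0 := sub_ne_zero.mpr hd
    ext i j
    fin_cases i <;> fin_cases j <;>
      simp [Fin.zero_eta, Fin.mk_one, Matrix.add_apply, Matrix.smul_apply, Matrix.one_apply]
    all_goals try field_simp
    all_goals first
      | ring1
      | linear_combination e1
      | linear_combination -e1
      | linear_combination e2
      | linear_combination -e2
      | linear_combination e3
      | linear_combination -e3

lemma commute_of_commute' (P X Y : Matrix (Fin 2) (Fin 2) ℂ)
    (hns : P 0 1 ≠ 0 ∨ P 1 0 ≠ 0 ∨ P 0 0 ≠ P 1 1)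
    (hX : X * P = P * X) (hY : Y * P = P * Y) : X * Y = Y * X := by
  obtain ⟨α, β, hXe⟩ := span_of_commute' P X hns hX
  obtain ⟨γ, δ, hYe⟩ := span_of_commute' P Y hns hY
  subst hXe hYe
  simp only [mul_add, add_mul, smul_mul_assoc, mul_smul_comm, smul_smul, mul_one, one_mul]
  module

end aux

/-- If `[A,B]·C₁·C₂ = Id` with `C₁ ∼ ξ_{λ₁}`, `C₂ ∼ ξ_{λ₂}` and some `P ≠ ±Id` commutes
with `A, B, C₁, C₂`, then `[A,B] = Id`, `C₂ = C₁⁻¹` and `λ₂ = λ₁` or `λ₂ = λ₁⁻¹`. -/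
theorem stmt7 (l₁ l₂ : ℂ)
    (hl₁0 : l₁ ≠ 0) (hl₁1 : l₁ ≠ 1) (hl₁2 : l₁ ≠ -1)
    (hl₂0 : l₂ ≠ 0) (hl₂1 : l₂ ≠ 1) (hl₂2 : l₂ ≠ -1)
    (A B C₁ C₂ : SL2C)
    (h : ⁅A, B⁆ * C₁ * C₂ = 1)
    (hC₁ : IsConj (xi l₁ hl₁0) C₁) (hC₂ : IsConj (xi l₂ hl₂0) C₂)
    (P : SL2C) (hP1 : P ≠ 1) (hP2 : P ≠ -1)
    (hPA : P * A = A * P) (hPB : P * B = B * P)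
    (hPC₁ : P * C₁ = C₁ * P) (hPC₂ : P * C₂ = C₂ * P) :
    ⁅A, B⁆ = 1 ∧ C₂ = C₁⁻¹ ∧ (l₂ = l₁ ∨ l₂ = l₁⁻¹) := by
  -- P is not a scalar matrix
  have hns : (P : Matrix (Fin 2) (Fin 2) ℂ) 0 1 ≠ 0 ∨
      (P : Matrix (Fin 2) (Fin 2) ℂ) 1 0 ≠ 0 ∨
      (P : Matrix (Fin 2) (Fin 2) ℂ) 0 0 ≠ (P : Matrix (Fin 2) (Fin 2) ℂ) 1 1 := by
    by_contra hcon
    push_neg at hcon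
    obtain ⟨hb, hc, hd⟩ := hcon
    have hdet : (P : Matrix (Fin 2) (Fin 2) ℂ).det = 1 := P.property
    rw [Matrix.det_fin_two] at hdet
    have hsq : (P : Matrix (Fin 2) (Fin 2) ℂ) 0 0 = 1 ∨
        (P : Matrix (Fin 2) (Fin 2) ℂ) 0 0 = -1 := by
      have : ((P : Matrix (Fin 2) (Fin 2) ℂ) 0 0 - 1) *
          ((P : Matrix (Fin 2) (Fin 2) ℂ) 0 0 + 1) = 0 := by
        linear_combination hdet + (P : Matrix (Fin 2) (Fin 2) ℂ) 0 0 * hd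
          + (P : Matrix (Fin 2) (Fin 2) ℂ) 0 1 * hc
      rcases mul_eq_zero.mp this with h' | h'
      · exact Or.inl (by linear_combination h')
      · exact Or.inr (by linear_combination h')
    rcases hsq with h' | h'
    · apply hP1
      ext i j
      fin_cases i <;> fin_cases j <;>
        simp [Fin.zero_eta, Fin.mk_one, hb, hc, h', ← hd]
    · apply hP2
      ext i j
      fin_cases i <;> fin_cases j <;>
        simp [Fin.zero_eta, Fin.mk_one, hb, hc, h', ← hd]
  -- anything commuting with P commutes with each other
  have key : ∀ X Y : SL2C, P * X = X * P → P * Y = Y * P → X * Y = Y * X := by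
    intro X Y hX hY
    have hX' : (X : Matrix (Fin 2) (Fin 2) ℂ) * P = (P : Matrix (Fin 2) (Fin 2) ℂ) * X := by
      have := congrArg (Subtype.val) hX
      simpa using this.symm
    have hY' : (Y : Matrix (Fin 2) (Fin 2) ℂ) * P = (P : Matrix (Fin 2) (Fin 2) ℂ) * Y := by
      have := congrArg (Subtype.val) hY
      simpa using this.symm
    have := commute_of_commute' P X Y hns hX' hY'
    ext i j
    have := congrFun (congrFun this i) j
    simpa using this
  have hAB : A * B = B * A := key A B hPA hPB
  have h1 : ⁅A, B⁆ = 1 := commutatorElement_eq_one_iff_commute.mpr hAB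
  rw [h1, one_mul] at h
  have h2 : C₂ = C₁⁻¹ := (mul_eq_one_iff_inv_eq.mp h).symm
  refine ⟨h1, h2, ?_⟩
  -- trace argument
  have trace_conj : ∀ (D : SL2C) (l : ℂ) (hl : l ≠ 0), IsConj (xi l hl) D →
      (D : Matrix (Fin 2) (Fin 2) ℂ).trace = l + l⁻¹ := by
    intro D l hl hDconj
    obtain ⟨Q, hQ⟩ := isConj_iff.mp hDconj
    have : (D : Matrix (Fin 2) (Fin 2) ℂ).trace
        = ((Q * xi l hl * Q⁻¹ : SL2C) : Matrix (Fin 2) (Fin 2) ℂ).trace := by rw [hQ]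
    rw [this]
    have hco : ((Q * xi l hl * Q⁻¹ : SL2C) : Matrix (Fin 2) (Fin 2) ℂ)
        = (Q : Matrix (Fin 2) (Fin 2) ℂ) * (xi l hl : Matrix (Fin 2) (Fin 2) ℂ)
          * ((Q⁻¹ : SL2C) : Matrix (Fin 2) (Fin 2) ℂ) := by simp
    rw [hco, Matrix.trace_mul_comm, ← mul_assoc]
    have hinv : ((Q⁻¹ : SL2C) : Matrix (Fin 2) (Fin 2) ℂ) * (Q : Matrix (Fin 2) (Fin 2) ℂ)
        = 1 := by
      rw [Matrix.SpecialLinearGroup.coe_inv, Matrix.adjugate_mul, Q.prop, one_smul]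
    rw [hinv, one_mul]
    simp [xi, Matrix.trace_fin_two]
  have t1 : (C₁ : Matrix (Fin 2) (Fin 2) ℂ).trace = l₁ + l₁⁻¹ := trace_conj C₁ l₁ hl₁0 hC₁
  have t2 : (C₂ : Matrix (Fin 2) (Fin 2) ℂ).trace = l₂ + l₂⁻¹ := trace_conj C₂ l₂ hl₂0 hC₂
  have tinv : ((C₁⁻¹ : SL2C) : Matrix (Fin 2) (Fin 2) ℂ).trace
      = (C₁ : Matrix (Fin 2) (Fin 2) ℂ).trace := by
    rw [Matrix.SpecialLinearGroup.coe_inv, Matrix.adjugate_fin_two,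
      Matrix.trace_fin_two]
    simp [Matrix.trace_fin_two, add_comm]
  have hsum : l₂ + l₂⁻¹ = l₁ + l₁⁻¹ := by
    rw [← t1, ← tinv, ← t2, h2]
  have hz : (l₂ - l₁) * (l₁ * l₂ - 1) = 0 := by
    field_simp at hsum
    linear_combination hsum
  rcases mul_eq_zero.mp hz with h' | h'
  · exact Or.inl (by linear_combination h')
  · refine Or.inr ?_
    field_simp
    linear_combination h'
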